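/- For every nonnegative integer N, G_{1,3N-2}(a,b,q) = ∑_{l=0}^{⌊N/2⌋} (q^3)^{binom(N-2l,2)} [N choose 2l]_{q^3} (-a q^2; q^6)_l (-b q^4; q^6)_l, where G_{1,3N-2}(a,b,q) is the generating function for partitions with no part equal to 1, consecutive-part differences ≥ 4 unless the parts are consecutive multiples of 3 or sum to a multiple of 6, largest part ≤ 3N-2, with a tracking parts ≡ 2 mod 3 and b tracking parts ≡ 1 mod 3. -/

import Mathlib

open Finset

namespace CapparelliAAG

noncomputable def a : MvPowerSeries (Fin 3) ℚ := MvPowerSeries.X 0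
noncomputable def b : MvPowerSeries (Fin 3) ℚ := MvPowerSeries.X 1
noncomputable def q : MvPowerSeries (Fin 3) ℚ := MvPowerSeries.X 2

/-- The finite q-Pochhammer symbol `(x; Q)_l = ∏_{t=0}^{l-1} (1 - x Qᵗ)`. -/
noncomputable def qPoch (x Q : MvPowerSeries (Fin 3) ℚ) (l : ℕ) : MvPowerSeries (Fin 3) ℚ :=
  ∏ t ∈ Finset.range l, (1 - x * Q ^ t)

/-- The Gaussian binomial coefficient `[N choose k]_Q` (zero unless `N ≥ k ≥ 0`). -/
noncomputable def qBinom (Q : MvPowerSeries (Fin 3) ℚ) (N k : ℕ) : MvPowerSeries (Fin 3) ℚ :=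
  if k ≤ N then ∏ t ∈ Finset.range k, (1 - Q ^ (N - t)) * (1 - Q ^ (t + 1))⁻¹ else 0

/-- `G₁ Nb` is the generating function `G_{1,Nb}(a,b,q)`: the coefficient of `aⁱ bʲ qⁿ`
is the number of partitions of `n` with no part equal to 1, largest part `≤ Nb`,
consecutive-part differences `≥ 4` unless the parts are consecutive multiples of 3 or
sum to a multiple of 6 (difference at least 2), with exactly `i` parts `≡ 2 (mod 3)`
and exactly `j` parts `≡ 1 (mod 3)`. -/
noncomputable def G₁ (Nb : ℕ) : MvPowerSeries (Fin 3) ℚ :=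
  fun d =>
    (Nat.card {l : List ℕ // (∀ x ∈ l, 0 < x ∧ x ≠ 1 ∧ x ≤ Nb) ∧
        l.Chain' (fun x y => y + 2 ≤ x ∧
          (y + 4 ≤ x ∨ (3 ∣ y ∧ x = y + 3) ∨ 6 ∣ (x + y))) ∧
        (l.filter (fun x => x % 3 = 2)).length = d 0 ∧
        (l.filter (fun x => x % 3 = 1)).length = d 1 ∧
        l.sum = d 2} : ℚ)

/-! ### Algebraic abbreviations -/

noncomputable def x3 : MvPowerSeries (Fin 3) ℚ := q ^ 3
noncomputable def Aq : MvPowerSeries (Fin 3) ℚ := a * q ^ 2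
noncomputable def Bq : MvPowerSeries (Fin 3) ℚ := b * q ^ 4

def cc (m : ℕ) : ℕ := Nat.choose m 2

lemma cc_add_one (m : ℕ) : cc (m + 1) = cc m + m := by
  simp [cc, Nat.choose_succ_succ, Nat.choose_one_right, Nat.add_comm]

noncomputable def Pa (l : ℕ) : MvPowerSeries (Fin 3) ℚ := qPoch (-(a * q ^ 2)) (q ^ 6) l
noncomputable def Pb (l : ℕ) : MvPowerSeries (Fin 3) ℚ := qPoch (-(b * q ^ 4)) (q ^ 6) l
noncomputable def gb (n k : ℕ) : MvPowerSeries (Fin 3) ℚ := qBinom (q ^ 3) n k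

lemma Pa_zero : Pa 0 = 1 := by simp [Pa, qPoch]
lemma Pb_zero : Pb 0 = 1 := by simp [Pb, qPoch]

lemma q_pow_six : (q ^ 6 : MvPowerSeries (Fin 3) ℚ) ^ (l : ℕ) = x3 ^ (2 * l) := by
  rw [x3, ← pow_mul, ← pow_mul]; ring_nf

lemma Pa_succ (l : ℕ) : Pa (l + 1) = Pa l * (1 + Aq * x3 ^ (2 * l)) := by
  rw [Pa, Pa, qPoch, qPoch, Finset.prod_range_succ, q_pow_six, Aq]; ring

lemma Pb_succ (l : ℕ) : Pb (l + 1) = Pb l * (1 + Bq * x3 ^ (2 * l)) := by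
  rw [Pb, Pb, qPoch, qPoch, Finset.prod_range_succ, q_pow_six, Bq]; ring

/-! ### Gaussian binomial lemmas -/

lemma constCoeff_x3_pow (m : ℕ) (hm : 1 ≤ m) :
    MvPowerSeries.constantCoeff (1 - x3 ^ m) = 1 := by
  rw [x3, ← pow_mul, map_sub, map_one, map_pow, q, MvPowerSeries.constantCoeff_X]
  rw [zero_pow (by omega)]; ring

lemma x3_cancel (m : ℕ) (hm : 1 ≤ m) :
    (1 - x3 ^ m) * (1 - x3 ^ m)⁻¹ = 1 :=
  MvPowerSeries.mul_inv_cancel _ (by rw [constCoeff_x3_pow m hm]; norm_num)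

lemma gb_eq_zero {n k : ℕ} (h : n < k) : gb n k = 0 := by
  rw [gb, qBinom, if_neg (by omega)]

lemma gb_zero_right (n : ℕ) : gb n 0 = 1 := by
  rw [gb, qBinom, if_pos (Nat.zero_le n)]; simp

lemma gb_pos (n k : ℕ) (h : k ≤ n) :
    gb n k = ∏ t ∈ Finset.range k, (1 - x3 ^ (n - t)) * (1 - x3 ^ (t + 1))⁻¹ := by
  rw [gb, qBinom, if_pos h]; rfl

lemma gbR (n j : ℕ) : (1 - x3 ^ (j + 1)) * gb n (j + 1) = (1 - x3 ^ (n - j)) * gb n j := by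
  rcases le_or_gt (j + 1) n with h | h
  · rw [gb_pos n (j+1) h, gb_pos n j (by omega), Finset.prod_range_succ]
    calc (1 - x3 ^ (j + 1)) * ((∏ t ∈ Finset.range j, (1 - x3 ^ (n - t)) * (1 - x3 ^ (t + 1))⁻¹) *
          ((1 - x3 ^ (n - j)) * (1 - x3 ^ (j + 1))⁻¹))
        = ((1 - x3 ^ (j + 1)) * (1 - x3 ^ (j + 1))⁻¹) * ((1 - x3 ^ (n - j)) *
            ∏ t ∈ Finset.range j, (1 - x3 ^ (n - t)) * (1 - x3 ^ (t + 1))⁻¹) := by ring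
      _ = _ := by rw [x3_cancel _ (by omega)]; ring
  · rcases le_or_gt j n with h2 | h2
    · have hj : j = n := by omega
      rw [gb_eq_zero (by omega), hj, Nat.sub_self, pow_zero, sub_self, mul_zero, zero_mul]
    · rw [gb_eq_zero (by omega), gb_eq_zero h2, mul_zero, mul_zero]

lemma gb_peel (n k : ℕ) (h : k ≤ n) :
    gb (n + 1) (k + 1) = (1 - x3 ^ (n + 1)) * (1 - x3 ^ (k + 1))⁻¹ * gb n k := by
  rw [gb_pos (n+1) (k+1) (by omega), gb_pos n k h]
  rw [Finset.prod_mul_distrib, Finset.prod_mul_distrib]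
  rw [Finset.prod_range_succ' (fun t => (1 - x3 ^ (n + 1 - t)))]
  rw [Finset.prod_range_succ (fun t => (1 - x3 ^ (t + 1))⁻¹)]
  have : ∀ t, n + 1 - (t + 1) = n - t := fun t => by omega
  simp only [this, Nat.sub_zero]
  ring

lemma gbP1 (n k : ℕ) : gb (n + 1) (k + 1) = gb n k + x3 ^ (k + 1) * gb n (k + 1) := by
  rcases le_or_gt k n with h | h
  · rw [gb_peel n k h]
    have key : (1 - x3 ^ (k + 1)) * (gb n k + x3 ^ (k + 1) * gb n (k + 1))
        = (1 - x3 ^ (n + 1)) * gb n k := by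
      have hR := gbR n k
      have hx : x3 ^ (k + 1) * x3 ^ (n - k) = x3 ^ (n + 1) := by
        rw [← pow_add]; congr 1; omega
      calc (1 - x3 ^ (k + 1)) * (gb n k + x3 ^ (k + 1) * gb n (k + 1))
          = (1 - x3 ^ (k + 1)) * gb n k + x3 ^ (k + 1) * ((1 - x3 ^ (k+1)) * gb n (k+1)) := by
            ring
        _ = (1 - x3 ^ (k + 1)) * gb n k + x3 ^ (k + 1) * ((1 - x3 ^ (n - k)) * gb n k) := by
            rw [hR]
        _ = (1 - x3 ^ (n + 1)) * gb n k := by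
            rw [show (1 - x3 ^ (k + 1)) * gb n k + x3 ^ (k + 1) * ((1 - x3 ^ (n - k)) * gb n k)
              = (1 - (x3 ^ (k+1) * x3 ^ (n - k))) * gb n k from by ring, hx]
    calc (1 - x3 ^ (n + 1)) * (1 - x3 ^ (k + 1))⁻¹ * gb n k
        = (1 - x3 ^ (k + 1))⁻¹ * ((1 - x3 ^ (n+1)) * gb n k) := by ring
      _ = (1 - x3 ^ (k + 1))⁻¹ * ((1 - x3 ^ (k + 1)) * (gb n k + x3 ^ (k + 1) * gb n (k + 1))) := by
          rw [key]
      _ = ((1 - x3 ^ (k + 1)) * (1 - x3 ^ (k + 1))⁻¹) * (gb n k + x3 ^ (k+1) * gb n (k+1)) := by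
          ring
      _ = _ := by rw [x3_cancel _ (by omega)]; ring
  · rw [gb_eq_zero (by omega), gb_eq_zero h, gb_eq_zero (by omega)]; ring

/-! ### The sums -/

noncomputable def FA (n : ℕ) : MvPowerSeries (Fin 3) ℚ :=
  ∑ l ∈ range (n + 1), x3 ^ cc (n - 2 * l) * gb n (2 * l) * Pa l * Pb l
noncomputable def FB (n : ℕ) : MvPowerSeries (Fin 3) ℚ :=
  ∑ l ∈ range (n + 1), x3 ^ cc (n - 1 - 2 * l) * gb n (2 * l + 1) * Pa l * Pb l
noncomputable def FD (n : ℕ) : MvPowerSeries (Fin 3) ℚ :=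
  ∑ l ∈ range (n + 1), x3 ^ cc (n - 2 - 2 * l) * gb (n - 1) (2 * l + 1) * Pa (l + 1) * Pb l
noncomputable def FC (n : ℕ) : MvPowerSeries (Fin 3) ℚ :=
  FA n + x3 ^ (n - 1) * (Aq + x3) * FB n

noncomputable def T1 (n : ℕ) : MvPowerSeries (Fin 3) ℚ :=
  ∑ l ∈ range (n + 2), x3 ^ cc (n - 2 * l) * gb (n + 1) (2 * l + 1) * Pa (l + 1) * Pb (l + 1)
noncomputable def UU (n : ℕ) : MvPowerSeries (Fin 3) ℚ :=
  ∑ l ∈ range (n + 2), x3 ^ (cc (n - 2 * l) + 2 * l) * gb (n + 1) (2 * l + 1) * Pa (l + 1) * Pb l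
noncomputable def WW (n : ℕ) : MvPowerSeries (Fin 3) ℚ :=
  ∑ l ∈ range (n + 2), x3 ^ (cc (n - 2 * l) + 2 * l) * gb (n + 1) (2 * l + 1) * Pa l * Pb l
noncomputable def ZZ (n : ℕ) : MvPowerSeries (Fin 3) ℚ :=
  ∑ l ∈ range (n + 2), x3 ^ (cc (n - 2 * l) + 2 * l) * ((1 - x3 ^ (2 * l + 2)) * gb (n + 1) (2 * l + 2)) * Pa l * Pb l
noncomputable def YY (n : ℕ) : MvPowerSeries (Fin 3) ℚ :=
  ∑ l ∈ range (n + 2), x3 ^ (cc (n - 2 * l) + 2 * l) * ((1 - x3 ^ (2 * l + 2)) * gb (n + 1) (2 * l + 2)) * Pa (l + 1) * Pb l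
noncomputable def Rp (n : ℕ) : MvPowerSeries (Fin 3) ℚ :=
  ∑ l ∈ range (n + 2), x3 ^ cc (n - 2 * l) * ((1 - x3 ^ (2 * l + 2)) * gb (n + 1) (2 * l + 2)) * Pa (l + 1) * Pb (l + 1)
noncomputable def Rm (n : ℕ) : MvPowerSeries (Fin 3) ℚ :=
  ∑ l ∈ range (n + 2), x3 ^ cc (n - 2 * l) * ((1 - x3 ^ (2 * l + 2)) * gb (n + 1) (2 * l + 2)) * Pa l * Pb l
noncomputable def SE (n : ℕ) : MvPowerSeries (Fin 3) ℚ :=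
  ∑ l ∈ range (n + 2), x3 ^ cc (n + 1 - 2 * l) * ((1 - x3 ^ (n + 1 - 2 * l)) * gb (n + 1) (2 * l)) * Pa l * Pb l

lemma sum_trim {M N : ℕ} (h : N ≤ M) (f : ℕ → MvPowerSeries (Fin 3) ℚ)
    (h0 : ∀ l, N ≤ l → f l = 0) : ∑ l ∈ range M, f l = ∑ l ∈ range N, f l := by
  symm
  apply Finset.sum_subset (Finset.range_subset_range.2 h)
  intro l hl hnl
  simp only [Finset.mem_range] at hl hnl
  exact h0 l (by omega)

lemma FD_eq (n : ℕ) : FD (n + 2) =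
    ∑ l ∈ range (n + 2), x3 ^ cc (n - 2 * l) * gb (n + 1) (2 * l + 1) * Pa (l + 1) * Pb l := by
  rw [FD]
  have h1 : ∀ l : ℕ, n + 2 - 2 - 2 * l = n - 2 * l := fun l => by omega
  have h2 : n + 2 - 1 = n + 1 := by omega
  simp only [h1, h2]
  apply sum_trim (by omega)
  intro l hl
  rw [gb_eq_zero (by omega)]; ring

lemma IIp (n : ℕ) : FB (n + 1) = FA n + x3 ^ n * FB n := by
  have e1 : FB (n+1) = ∑ l ∈ range (n+2),
      (x3 ^ cc (n - 2*l) * gb n (2*l) * Pa l * Pb l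
        + x3 ^ (n + cc (n - 1 - 2*l)) * gb n (2*l+1) * Pa l * Pb l) := by
    rw [FB]
    apply Finset.sum_congr rfl
    intro l _
    have hn1 : n + 1 - 1 - 2 * l = n - 2*l := by omega
    rw [hn1, gbP1 n (2*l)]
    rcases le_or_gt (2*l+1) n with h | h
    · have hx : x3 ^ cc (n - 2*l) * x3 ^ (2*l+1) = x3 ^ (n + cc (n - 1 - 2*l)) := by
        rw [← pow_add]
        congr 1
        rw [show n - 2*l = (n - 1 - 2*l) + 1 by omega, cc_add_one]; omega
      linear_combination (gb n (2*l+1) * Pa l * Pb l) * hx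
    · rw [gb_eq_zero h]; ring
  rw [e1, Finset.sum_add_distrib]
  congr 1
  · rw [FA]
    apply sum_trim (by omega)
    intro l hl
    rw [gb_eq_zero (by omega)]; ring
  · rw [FB, Finset.mul_sum]
    rw [sum_trim (show n+1 ≤ n+2 by omega) _ (fun l hl => by rw [gb_eq_zero (by omega)]; ring)]
    apply Finset.sum_congr rfl
    intro l _
    rw [pow_add]; ring

lemma S1 (n : ℕ) : FA (n + 2) = x3 ^ (n + 1) * FA (n + 1) + T1 n := by
  rw [FA, Finset.sum_range_succ']
  have hshift : ∀ l : ℕ, n + 2 - 2 * (l + 1) = n - 2 * l := fun l => by omega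
  have e1 : ∀ l ∈ range (n + 2),
      x3 ^ cc (n + 2 - 2 * (l+1)) * gb (n+2) (2 * (l+1)) * Pa (l+1) * Pb (l+1)
      = x3 ^ cc (n - 2*l) * gb (n+1) (2*l+1) * Pa (l+1) * Pb (l+1)
        + x3 ^ (cc (n - 2*l) + (2*l+2)) * gb (n+1) (2*l+2) * Pa (l+1) * Pb (l+1) := by
    intro l _
    rw [hshift l, show 2*(l+1) = (2*l+1)+1 by ring, gbP1 (n+1) (2*l+1), pow_add]
    ring
  rw [Finset.sum_congr rfl e1, Finset.sum_add_distrib]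
  have e2 : ∑ l ∈ range (n+2), x3 ^ (cc (n - 2*l) + (2*l+2)) * gb (n+1) (2*l+2) * Pa (l+1) * Pb (l+1)
      + x3 ^ cc (n + 2 - 2 * 0) * gb (n+2) (2*0) * Pa 0 * Pb 0
      = x3 ^ (n+1) * FA (n+1) := by
    conv_rhs => rw [FA, Finset.mul_sum, Finset.sum_range_succ']
    congr 1
    · rw [sum_trim (show n+1 ≤ n+2 by omega) _
        (fun l hl => by rw [gb_eq_zero (by omega)]; ring)]
      apply Finset.sum_congr rfl
      intro l _
      rcases le_or_gt (2*l+2) (n+1) with h | h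
      · have hx : x3 ^ (cc (n - 2*l) + (2*l+2)) = x3 ^ (n+1) * x3 ^ cc (n + 1 - 2*(l+1)) := by
          rw [← pow_add]
          congr 1
          rw [show n - 2*l = (n + 1 - 2*(l+1)) + 1 by omega, cc_add_one]; omega
        rw [hx, show 2*(l+1) = 2*l+2 by ring]; ring
      · rw [gb_eq_zero (by omega), gb_eq_zero (show n+1 < 2*(l+1) by omega)]; ring
    · rw [gb_zero_right, gb_zero_right, Pa_zero, Pb_zero]
      rw [show n + 2 - 2*0 = (n+1) + 1 by omega, show n + 1 - 2*0 = n+1 by omega, cc_add_one,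
        pow_add]
      ring
  rw [T1, ← e2]
  ring

lemma S2 (n : ℕ) : T1 n = FD (n + 2) + Bq * UU n := by
  rw [T1, FD_eq, UU, Finset.mul_sum, ← Finset.sum_add_distrib]
  apply Finset.sum_congr rfl
  intro l _
  rw [Pb_succ, pow_add]; ring

lemma S3 (n : ℕ) : FD (n + 2) = FB (n + 1) + Aq * WW n := by
  rw [FD_eq, WW, Finset.mul_sum, FB, ← Finset.sum_add_distrib]
  apply Finset.sum_congr rfl
  intro l _
  rw [Pa_succ, show n + 1 - 1 - 2*l = n - 2*l by omega, pow_add]; ring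

lemma S4 (n : ℕ) : WW n = x3 ^ n * FB (n + 1) + ZZ n := by
  rw [WW, ZZ, FB, Finset.mul_sum, ← Finset.sum_add_distrib]
  apply Finset.sum_congr rfl
  intro l _
  rw [show n + 1 - 1 - 2*l = n - 2*l by omega]
  have hR := gbR (n+1) (2*l+1)
  rw [show n + 1 - (2*l+1) = n - 2*l by omega] at hR
  rcases le_or_gt (2*l) n with h | h
  · have hx : x3 ^ (cc (n - 2*l) + 2*l) * x3 ^ (n - 2*l) = x3 ^ (n + cc (n - 2*l)) := by
      rw [← pow_add]; congr 1; omega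
    linear_combination (-(x3 ^ (cc (n - 2*l) + 2*l) * Pa l * Pb l)) * hR
      + (gb (n+1) (2*l+1) * Pa l * Pb l) * hx
  · rw [gb_eq_zero (show n+1 < 2*l+1 by omega), gb_eq_zero (show n+1 < 2*l+2 by omega)]
    ring

lemma S5 (n : ℕ) : UU n = x3 ^ n * FD (n + 2) + YY n := by
  rw [UU, YY, FD_eq, Finset.mul_sum, ← Finset.sum_add_distrib]
  apply Finset.sum_congr rfl
  intro l _
  have hR := gbR (n+1) (2*l+1)
  rw [show n + 1 - (2*l+1) = n - 2*l by omega] at hR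
  rcases le_or_gt (2*l) n with h | h
  · have hx : x3 ^ (cc (n - 2*l) + 2*l) * x3 ^ (n - 2*l) = x3 ^ (n + cc (n - 2*l)) := by
      rw [← pow_add]; congr 1; omega
    linear_combination (-(x3 ^ (cc (n - 2*l) + 2*l) * Pa (l+1) * Pb l)) * hR
      + (gb (n+1) (2*l+1) * Pa (l+1) * Pb l) * hx
  · rw [gb_eq_zero (show n+1 < 2*l+1 by omega), gb_eq_zero (show n+1 < 2*l+2 by omega)]
    ring

lemma S6 (n : ℕ) : Aq * ZZ n + Bq * YY n = Rp n - Rm n := by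
  rw [ZZ, YY, Rp, Rm, Finset.mul_sum, Finset.mul_sum, ← Finset.sum_add_distrib,
    ← Finset.sum_sub_distrib]
  apply Finset.sum_congr rfl
  intro l _
  rw [Pa_succ, Pb_succ, pow_add]; ring

lemma Rp_eq (n : ℕ) : Rp n =
    ∑ l ∈ range (n + 3), x3 ^ cc (n + 2 - 2 * l) * ((1 - x3 ^ (2 * l)) * gb (n + 1) (2 * l)) * Pa l * Pb l := by
  rw [Rp]
  conv_rhs => rw [Finset.sum_range_succ']
  have e0 : x3 ^ cc (n + 2 - 2*0) * ((1 - x3 ^ (2*0)) * gb (n+1) (2*0)) * Pa 0 * Pb 0 = 0 := by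
    simp
  rw [e0, add_zero]
  apply Finset.sum_congr rfl
  intro l _
  rw [show n + 2 - 2*(l+1) = n - 2*l by omega, show 2*(l+1) = 2*l+2 by ring]

lemma S7 (n : ℕ) : (1 - x3 ^ (n + 1)) * FA (n + 1) = SE n + Rp n := by
  rw [Rp_eq, SE, FA, Finset.mul_sum]
  rw [sum_trim (show n+2 ≤ n+3 by omega) _
    (fun l hl => by rw [gb_eq_zero (by omega)]; ring)]
  rw [← Finset.sum_add_distrib]
  apply Finset.sum_congr rfl
  intro l _
  rcases le_or_gt (2*l) (n+1) with h | h
  · have hc : cc (n + 2 - 2*l) = cc (n + 1 - 2*l) + (n + 1 - 2*l) := by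
      rw [show n + 2 - 2*l = (n + 1 - 2*l) + 1 by omega, cc_add_one]
    have hx : x3 ^ (n + 1 - 2*l) * x3 ^ (2*l) = x3 ^ (n+1) := by
      rw [← pow_add]; congr 1; omega
    rw [hc, pow_add]
    linear_combination (x3 ^ cc (n + 1 - 2*l) * gb (n+1) (2*l) * Pa l * Pb l) * hx
  · rw [gb_eq_zero (show n+1 < 2*l by omega)]; ring

lemma S8 (n : ℕ) : (1 - x3 ^ (n + 1)) * FB (n + 1) = SE n + Rm n := by
  rw [SE, FB, Rm, Finset.mul_sum, ← Finset.sum_add_distrib]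
  apply Finset.sum_congr rfl
  intro l _
  rw [show n + 1 - 1 - 2*l = n - 2*l by omega]
  have hR1 := gbR (n+1) (2*l)
  have hR2 := gbR (n+1) (2*l+1)
  rw [show n + 1 - (2*l+1) = n - 2*l by omega] at hR2
  rcases le_or_gt (2*l) n with h | h
  · rw [show n + 1 - 2*l = n - 2*l + 1 by omega] at hR1 ⊢
    rw [cc_add_one, pow_add]
    have hx : x3 ^ (n - 2*l) * x3 ^ (2*l+1) = x3 ^ (n+1) := by
      rw [← pow_add]; congr 1; omega
    linear_combination (x3 ^ cc (n - 2*l) * x3 ^ (n - 2*l) * Pa l * Pb l) * hR1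
      + (-(x3 ^ cc (n - 2*l) * Pa l * Pb l)) * hR2
      + (x3 ^ cc (n - 2*l) * gb (n+1) (2*l+1) * Pa l * Pb l) * hx
  · rcases le_or_gt (2*l) (n+1) with h2 | h2
    · -- 2l = n+1
      rw [gb_eq_zero (show n+1 < 2*l+1 by omega), gb_eq_zero (show n+1 < 2*l+2 by omega),
        show n + 1 - 2*l = 0 by omega, pow_zero, sub_self]
      ring
    · rw [gb_eq_zero (show n+1 < 2*l+1 by omega), gb_eq_zero (show n+1 < 2*l+2 by omega),
        gb_eq_zero (show n+1 < 2*l by omega)]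
      ring

lemma III (n : ℕ) : FA (n + 2) = FA (n + 1) + (Aq + x3) * x3 ^ n * FB (n + 1)
    + Bq * x3 ^ n * FD (n + 2) := by
  linear_combination S1 n + S2 n + S3 n + Aq * S4 n + Bq * S5 n + S6 n - S7 n + S8 n


lemma FD_eq3 (n : ℕ) : FD (n + 3) =
    ∑ l ∈ range (n + 3), x3 ^ cc (n + 1 - 2 * l) * gb (n + 2) (2 * l + 1) * Pa (l + 1) * Pb l := by
  rw [FD]
  have h1 : ∀ l : ℕ, n + 3 - 2 - 2 * l = n + 1 - 2 * l := fun l => by omega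
  have h2 : n + 3 - 1 = n + 2 := by omega
  simp only [h1, h2]
  apply sum_trim (by omega)
  intro l hl
  rw [gb_eq_zero (by omega)]; ring

lemma IV (n : ℕ) : FD (n + 3) = FA (n + 1) + (Aq + x3) * x3 ^ n * FB (n + 1)
    + Aq * x3 ^ (n + 1) * FA (n + 1) := by
  have hmain : FD (n + 3) = ∑ l ∈ range (n + 3),
      (x3 ^ cc (n + 1 - 2*l) * gb (n+1) (2*l) * Pa l * Pb l
       + Aq * (x3 ^ (cc (n + 1 - 2*l) + (n+1)) * gb (n+1) (2*l) * Pa l * Pb l)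
       + x3 ^ (cc (n - 2*l) + (n+1)) * gb (n+1) (2*l+1) * Pa l * Pb l
       + Aq * (x3 ^ (cc (n - 2*l) + n) * gb (n+1) (2*l+1) * Pa l * Pb l)) := by
    rw [FD_eq3]
    apply Finset.sum_congr rfl
    intro l _
    rw [show (2:ℕ)*l+1 = 2*l+1 by rfl, gbP1 (n+1) (2*l), Pa_succ]
    rcases le_or_gt (2*l) n with h | h
    · obtain ⟨e, he⟩ := Nat.le.dest h
      subst he
      have hR := gbR (2*l+e+1) (2*l)
      rw [show 2*l+e+1 - 2*l = e + 1 by omega] at hR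
      rw [show 2*l+e+1 - 2*l = e + 1 by omega, show 2*l+e - 2*l = e by omega, cc_add_one]
      linear_combination (-(Aq * x3 ^ (cc e + e + 2*l) * Pa l * Pb l)) * hR
    · rcases le_or_gt (2*l) (n+1) with h2 | h2
      · rw [gb_eq_zero (show n+1 < 2*l+1 by omega), show 2*l = n+1 by omega,
          show n + 1 - (n+1) = 0 by omega]
        ring
      · rw [gb_eq_zero (show n+1 < 2*l+1 by omega), gb_eq_zero (show n+1 < 2*l by omega)]
        ring
  have hp1 : ∑ l ∈ range (n + 3), x3 ^ cc (n + 1 - 2*l) * gb (n+1) (2*l) * Pa l * Pb l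
      = FA (n+1) := by
    rw [FA]
    apply sum_trim (by omega)
    intro l hl
    rw [gb_eq_zero (by omega)]; ring
  have hp2 : ∑ l ∈ range (n + 3), Aq * (x3 ^ (cc (n + 1 - 2*l) + (n+1)) * gb (n+1) (2*l) * Pa l * Pb l)
      = Aq * x3 ^ (n+1) * FA (n+1) := by
    rw [FA, Finset.mul_sum]
    rw [sum_trim (show n+2 ≤ n+3 by omega) _ (fun l hl => by rw [gb_eq_zero (by omega)]; ring)]
    apply Finset.sum_congr rfl
    intro l _
    rw [pow_add]; ring
  have hp3 : ∑ l ∈ range (n + 3), x3 ^ (cc (n - 2*l) + (n+1)) * gb (n+1) (2*l+1) * Pa l * Pb l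
      = x3 ^ (n+1) * FB (n+1) := by
    rw [FB, Finset.mul_sum]
    rw [sum_trim (show n+2 ≤ n+3 by omega) _ (fun l hl => by rw [gb_eq_zero (by omega)]; ring)]
    apply Finset.sum_congr rfl
    intro l _
    rw [show n + 1 - 1 - 2*l = n - 2*l by omega, pow_add]; ring
  have hp4 : ∑ l ∈ range (n + 3), Aq * (x3 ^ (cc (n - 2*l) + n) * gb (n+1) (2*l+1) * Pa l * Pb l)
      = Aq * x3 ^ n * FB (n+1) := by
    rw [FB, Finset.mul_sum]
    rw [sum_trim (show n+2 ≤ n+3 by omega) _ (fun l hl => by rw [gb_eq_zero (by omega)]; ring)]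
    apply Finset.sum_congr rfl
    intro l _
    rw [show n + 1 - 1 - 2*l = n - 2*l by omega, pow_add]; ring
  rw [hmain, Finset.sum_add_distrib, Finset.sum_add_distrib, Finset.sum_add_distrib,
    hp1, hp2, hp3, hp4]
  ring

/-! ### small values -/

lemma FB_zero : FB 0 = 0 := by
  rw [FB]
  apply Finset.sum_eq_zero
  intro l _
  rw [gb_eq_zero (by omega)]; ring

lemma FA_zero : FA 0 = 1 := by
  rw [FA, Finset.sum_range_one, gb_zero_right, Pa_zero, Pb_zero]
  norm_num [cc]

lemma FA_one : FA 1 = 1 := by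
  rw [FA, Finset.sum_range_succ, Finset.sum_range_one, gb_zero_right, Pa_zero, Pb_zero,
    gb_eq_zero (show (1:ℕ) < 2*1 by omega)]
  norm_num [cc]

lemma gb_one_one : gb 1 1 = 1 := by
  rw [gb_pos 1 1 le_rfl, Finset.prod_range_one]
  simpa using x3_cancel 1 le_rfl

lemma Pa_one : Pa 1 = 1 + Aq := by
  have h := Pa_succ 0
  rw [Pa_zero] at h
  simpa using h

lemma FD_two : FD 2 = FA 0 + Aq * FA 0 := by
  have h := FD_eq 0
  rw [Finset.sum_range_succ, Finset.sum_range_one] at h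
  norm_num at h
  rw [h, FA_zero, gb_eq_zero (show (1:ℕ) < 3 by omega), gb_one_one, Pa_one, Pb_zero]
  norm_num [cc]

lemma FC_zero : FC 0 = 1 := by
  rw [FC, FB_zero, FA_zero]; ring

lemma AlgII (n : ℕ) : FC (n + 1) = FA (n + 1) + Aq * x3 ^ n * FA n + x3 ^ (n + 1) * FC n := by
  cases n with
  | zero =>
    have hB1 : FB 1 = FA 0 := by rw [IIp 0, FB_zero]; simp
    rw [FC, FC, hB1, FB_zero]
    norm_num
    ring
  | succ m =>
    rw [FC, FC]
    simp only [Nat.add_sub_cancel]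
    have h := IIp (m + 1)
    linear_combination (x3 ^ (m + 1) * (Aq + x3)) * h

lemma AlgI (n : ℕ) : FA (n + 2) = FC (n + 1) + Bq * x3 ^ n * FC n
    + Aq * Bq * x3 ^ (2 * n) * FA n := by
  cases n with
  | zero =>
    have h3 := III 0
    rw [FD_two] at h3
    have hB1 : FB 1 = FA 0 := by rw [IIp 0, FB_zero]; simp
    rw [FC, FC, hB1, FB_zero]
    norm_num at h3 ⊢
    linear_combination h3 + (Aq + x3) * hB1
  | succ m =>
    have h3 := III (m + 1)
    have h4 := IV m
    rw [FC, FC]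
    simp only [Nat.add_sub_cancel]
    rw [show 2 * (m + 1) = m + 1 + (m + 1) by ring, pow_add]
    linear_combination h3 + (Bq * x3 ^ (m + 1)) * h4

/-! ### Combinatorial definitions -/

def relc (x y : ℕ) : Prop := y + 2 ≤ x ∧ (y + 4 ≤ x ∨ (3 ∣ y ∧ x = y + 3) ∨ 6 ∣ (x + y))

def pred (Nb : ℕ) (d : Fin 3 →₀ ℕ) (l : List ℕ) : Prop :=
  (∀ x ∈ l, 0 < x ∧ x ≠ 1 ∧ x ≤ Nb) ∧
  l.Chain' relc ∧
  (l.filter (fun x => x % 3 = 2)).length = d 0 ∧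
  (l.filter (fun x => x % 3 = 1)).length = d 1 ∧
  l.sum = d 2

noncomputable def Ex (m : ℕ) : MvPowerSeries (Fin 3) ℚ :=
  fun d => (Nat.card {l : List ℕ // pred m d l ∧ l.head? = some m} : ℚ)

lemma coeffG (Nb : ℕ) (d : Fin 3 →₀ ℕ) :
    MvPowerSeries.coeff d (G₁ Nb) = (Nat.card {l : List ℕ // pred Nb d l} : ℚ) := rfl

lemma coeffEx (m : ℕ) (d : Fin 3 →₀ ℕ) :
    MvPowerSeries.coeff d (Ex m) = (Nat.card {l : List ℕ // pred m d l ∧ l.head? = some m} : ℚ) := rfl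

/-! ### Finiteness -/

lemma finite_bdd (s : ℕ) : {l : List ℕ | l.length ≤ s ∧ ∀ x ∈ l, x ≤ s}.Finite := by
  have h := List.finite_length_le (Fin (s + 1)) s
  apply Set.Finite.subset (h.image (List.map Fin.val))
  rintro l ⟨hlen, hmem⟩
  refine ⟨l.pmap (fun x hx => (⟨x, hx⟩ : Fin (s + 1)))
    (fun x hx => Nat.lt_succ_of_le (hmem x hx)), ?_, ?_⟩
  · simpa using hlen
  · rw [List.map_pmap]
    simp

lemma length_le_sum (l : List ℕ) (h : ∀ x ∈ l, 0 < x) : l.length ≤ l.sum := by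
  induction l with
  | nil => simp
  | cons x t ih =>
    simp only [List.length_cons, List.sum_cons]
    have h1 := h x (by simp)
    have h2 := ih (fun y hy => h y (by simp [hy]))
    omega

lemma set_finite_pred (Nb : ℕ) (d : Fin 3 →₀ ℕ) : {l : List ℕ | pred Nb d l}.Finite := by
  have hsub : {l : List ℕ | pred Nb d l} ⊆ {l : List ℕ | l.length ≤ d 2 ∧ ∀ x ∈ l, x ≤ d 2} := by
    rintro l ⟨hparts, _, _, _, hsum⟩
    constructor
    · rw [← hsum]; exact length_le_sum l (fun x hx => (hparts x hx).1)
    · intro x hx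
      rw [← hsum]
      exact List.le_sum_of_mem hx
  exact (finite_bdd (d 2)).subset hsub

lemma finite_pred (Nb : ℕ) (d : Fin 3 →₀ ℕ) : Finite {l : List ℕ // pred Nb d l} :=
  (set_finite_pred Nb d).to_subtype

lemma finite_predEx (m : ℕ) (d : Fin 3 →₀ ℕ) :
    Finite {l : List ℕ // pred m d l ∧ l.head? = some m} :=
  ((set_finite_pred m d).subset (fun _ h => h.1)).to_subtype

/-! ### list facts -/

lemma lt_head {t : List ℕ} {h0 : ℕ} (hc : List.Chain' relc (h0 :: t)) : ∀ x ∈ t, x < h0 := by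
  induction t generalizing h0 with
  | nil => simp
  | cons y t' ih =>
    rw [List.Chain', List.isChain_cons_cons] at hc
    intro x hx
    rcases List.mem_cons.1 hx with rfl | hx'
    · have := hc.1.1; omega
    · have hy := ih hc.2 x hx'
      have := hc.1.1; omega

lemma head?_destruct {l : List ℕ} {m : ℕ} (h : l.head? = some m) : l = m :: l.tail := by
  cases l with
  | nil => simp at h
  | cons x t => simp only [List.head?_cons, Option.some.injEq] at h; rw [h]; rfl

/-! ### the exponent Finsupp -/

noncomputable def em (m : ℕ) : Fin 3 →₀ ℕ :=
  Finsupp.single 2 m +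
    (if m % 3 = 2 then Finsupp.single 0 1 else if m % 3 = 1 then Finsupp.single 1 1 else 0)

lemma em_apply0 (m : ℕ) : em m 0 = if m % 3 = 2 then 1 else 0 := by
  have h3 : m % 3 = 0 ∨ m % 3 = 1 ∨ m % 3 = 2 := by omega
  rcases h3 with h | h | h <;> simp [em, h, Finsupp.single_apply]

lemma em_apply1 (m : ℕ) : em m 1 = if m % 3 = 1 then 1 else 0 := by
  have h3 : m % 3 = 0 ∨ m % 3 = 1 ∨ m % 3 = 2 := by omega
  rcases h3 with h | h | h <;> simp [em, h, Finsupp.single_apply]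

lemma em_apply2 (m : ℕ) : em m 2 = m := by
  have h3 : m % 3 = 0 ∨ m % 3 = 1 ∨ m % 3 = 2 := by omega
  rcases h3 with h | h | h <;> simp [em, h, Finsupp.single_apply]


/-! ### data translation -/

lemma dat_cons {m : ℕ} {d : Fin 3 →₀ ℕ} (hle : em m ≤ d) (t : List ℕ) :
    (((m :: t).filter (fun x => x % 3 = 2)).length = d 0 ∧
     ((m :: t).filter (fun x => x % 3 = 1)).length = d 1 ∧ (m :: t).sum = d 2) ↔
    ((t.filter (fun x => x % 3 = 2)).length = (d - em m) 0 ∧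
     (t.filter (fun x => x % 3 = 1)).length = (d - em m) 1 ∧ t.sum = (d - em m) 2) := by
  have hle0 : em m 0 ≤ d 0 := hle 0
  have hle1 : em m 1 ≤ d 1 := hle 1
  have hle2 : em m 2 ≤ d 2 := hle 2
  rw [em_apply0] at hle0
  rw [em_apply1] at hle1
  rw [em_apply2] at hle2
  have key2 : ((m :: t).filter (fun x => x % 3 = 2)).length
      = (if m % 3 = 2 then 1 else 0) + (t.filter (fun x => x % 3 = 2)).length := by
    by_cases h : m % 3 = 2 <;> simp [List.filter_cons, h] <;> omega
  have key1 : ((m :: t).filter (fun x => x % 3 = 1)).length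
      = (if m % 3 = 1 then 1 else 0) + (t.filter (fun x => x % 3 = 1)).length := by
    by_cases h : m % 3 = 1 <;> simp [List.filter_cons, h] <;> omega
  rw [key2, key1, List.sum_cons, Finsupp.tsub_apply, Finsupp.tsub_apply, Finsupp.tsub_apply,
    em_apply0, em_apply1, em_apply2]
  have h3 : m % 3 = 0 ∨ m % 3 = 1 ∨ m % 3 = 2 := by omega
  rcases h3 with h | h | h <;> simp only [h] at hle0 hle1 ⊢ <;> norm_num at hle0 hle1 ⊢ <;> omega

lemma em_le_of {m : ℕ} {d : Fin 3 →₀ ℕ} {t : List ℕ}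
    (h0 : ((m :: t).filter (fun x => x % 3 = 2)).length = d 0)
    (h1 : ((m :: t).filter (fun x => x % 3 = 1)).length = d 1)
    (h2 : (m :: t).sum = d 2) : em m ≤ d := by
  intro i
  fin_cases i
  · show em m 0 ≤ d 0
    rw [em_apply0, ← h0]
    by_cases h : m % 3 = 2 <;> simp [List.filter_cons, h]
  · show em m 1 ≤ d 1
    rw [em_apply1, ← h1]
    by_cases h : m % 3 = 1 <;> simp [List.filter_cons, h]
  · show em m 2 ≤ d 2
    rw [em_apply2, ← h2, List.sum_cons]
    omega


/-! ### pred manipulation lemmas -/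

lemma pred_lower {m : ℕ} {d : Fin 3 →₀ ℕ} (l : List ℕ) :
    (pred m d l ∧ ¬ l.head? = some m) ↔ pred (m - 1) d l := by
  constructor
  · rintro ⟨⟨hp, hc, h0, h1, h2⟩, hh⟩
    refine ⟨?_, hc, h0, h1, h2⟩
    intro x hx
    obtain ⟨hx1, hx2, hx3⟩ := hp x hx
    refine ⟨hx1, hx2, ?_⟩
    cases l with
    | nil => simp at hx
    | cons h0' t =>
      have hne : h0' ≠ m := fun he => hh (by rw [he]; rfl)
      have hh0 : h0' ≤ m := (hp h0' (by simp)).2.2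
      rcases List.mem_cons.1 hx with rfl | hx'
      · omega
      · have := lt_head hc x hx'
        omega
  · rintro ⟨hp, hc, h0, h1, h2⟩
    refine ⟨⟨?_, hc, h0, h1, h2⟩, ?_⟩
    · intro x hx
      obtain ⟨a1, a2, a3⟩ := hp x hx
      exact ⟨a1, a2, by omega⟩
    · intro hh
      cases l with
      | nil => simp at hh
      | cons h0' t =>
        have he : h0' = m := by simpa using hh
        have h1' := (hp h0' (by simp)).2.2
        have h2' := (hp h0' (by simp)).1
        omega

lemma split_head {m : ℕ} : G₁ m = G₁ (m - 1) + Ex m := by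
  apply MvPowerSeries.ext
  intro d
  rw [map_add, coeffG, coeffG, coeffEx]
  have F0 : Finite {l : List ℕ // pred m d l} := finite_pred _ _
  have F1 : Finite {l : List ℕ // pred (m-1) d l} := finite_pred _ _
  have F2 : Finite {l : List ℕ // pred m d l ∧ l.head? = some m} := finite_predEx _ _
  rw [← Nat.cast_add, Nat.cast_inj]
  classical
  have E : {l : List ℕ // pred m d l} ≃
      {l : List ℕ // pred (m - 1) d l} ⊕ {l : List ℕ // pred m d l ∧ l.head? = some m} :=
    calc {l : List ℕ // pred m d l}
        ≃ {x : {l : List ℕ // pred m d l} // x.1.head? = some m}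
          ⊕ {x : {l : List ℕ // pred m d l} // ¬ x.1.head? = some m} :=
          (Equiv.sumCompl _).symm
      _ ≃ {l : List ℕ // pred m d l ∧ l.head? = some m}
          ⊕ {l : List ℕ // pred (m - 1) d l} :=
          Equiv.sumCongr
            (Equiv.subtypeSubtypeEquivSubtypeInter (pred m d) (fun l => l.head? = some m))
            ((Equiv.subtypeSubtypeEquivSubtypeInter (pred m d) (fun l => ¬ l.head? = some m)).trans
              (Equiv.subtypeEquivRight pred_lower))
      _ ≃ {l : List ℕ // pred (m - 1) d l}
          ⊕ {l : List ℕ // pred m d l ∧ l.head? = some m} := Equiv.sumComm _ _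
  rw [Nat.card_congr E, Nat.card_sum]

lemma pred_tail {m k : ℕ} {d : Fin 3 →₀ ℕ} {t : List ℕ}
    (H : ∀ y, 2 ≤ y → t.head? = some y → relc m y → y ≤ k)
    (hle : em m ≤ d) (h : pred m d (m :: t)) : pred k (d - em m) t := by
  obtain ⟨hp, hc, h0, h1, h2⟩ := h
  rw [List.Chain', List.isChain_cons] at hc
  obtain ⟨hhead, hct⟩ := hc
  have hbound : ∀ x ∈ t, x ≤ k := by
    cases t with
    | nil => simp
    | cons y t' =>
      have hy2 : 2 ≤ y := by have := hp y (by simp); omega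
      have hyk : y ≤ k := H y hy2 rfl (hhead y rfl)
      intro x hx
      rcases List.mem_cons.1 hx with rfl | hx'
      · exact hyk
      · have := lt_head hct x hx'
        omega
  have hdat := (dat_cons hle t).1 ⟨h0, h1, h2⟩
  exact ⟨fun x hx => ⟨(hp x (by simp [hx])).1, (hp x (by simp [hx])).2.1, hbound x hx⟩,
    hct, hdat.1, hdat.2.1, hdat.2.2⟩

lemma pred_cons {m k : ℕ} {d : Fin 3 →₀ ℕ} (hm : 2 ≤ m) (hk : k ≤ m)
    (H : ∀ y, 2 ≤ y → y ≤ k → relc m y)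
    (hle : em m ≤ d) {t : List ℕ} (h : pred k (d - em m) t) :
    pred m d (m :: t) ∧ (m :: t).head? = some m := by
  obtain ⟨hp, hc, h0, h1, h2⟩ := h
  have hdat := (dat_cons hle t).2 ⟨h0, h1, h2⟩
  refine ⟨⟨?_, ?_, hdat.1, hdat.2.1, hdat.2.2⟩, rfl⟩
  · intro x hx
    rcases List.mem_cons.1 hx with rfl | hx'
    · exact ⟨by omega, by omega, le_rfl⟩
    · obtain ⟨a1, a2, a3⟩ := hp x hx'
      exact ⟨a1, a2, by omega⟩
  · rw [List.Chain', List.isChain_cons]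
    refine ⟨?_, hc⟩
    intro y hy
    have hyt : y ∈ t := List.mem_of_mem_head? hy
    have hy2 : 2 ≤ y := by have := hp y hyt; omega
    exact H y hy2 ((hp y hyt).2.2)

lemma cons_interval {m k : ℕ} (hm : 2 ≤ m) (hk : k ≤ m)
    (H : ∀ y, 2 ≤ y → (relc m y ↔ y ≤ k)) :
    Ex m = (MvPowerSeries.monomial (em m)) 1 * G₁ k := by
  apply MvPowerSeries.ext
  intro d
  rw [MvPowerSeries.coeff_monomial_mul, coeffEx]
  by_cases hle : em m ≤ d
  · rw [if_pos hle, one_mul, coeffG, Nat.cast_inj]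
    apply Nat.card_congr
    refine ⟨fun z => ⟨z.1.tail, ?_⟩, fun z => ⟨m :: z.1, pred_cons hm hk
        (fun y hy2 hyk => (H y hy2).2 hyk) hle z.2⟩, ?_, ?_⟩
    · have h := z.2.1
      rw [head?_destruct z.2.2] at h
      exact pred_tail (fun y hy2 _ hr => (H y hy2).1 hr) hle h
    · intro z
      exact Subtype.ext (head?_destruct z.2.2).symm
    · intro z
      exact Subtype.ext rfl
  · rw [if_neg hle]
    have : IsEmpty {l : List ℕ // pred m d l ∧ l.head? = some m} := by
      constructor
      rintro ⟨l, ⟨hp, hc, h0, h1, h2⟩, hh⟩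
      rw [head?_destruct hh] at h0 h1 h2
      exact hle (em_le_of h0 h1 h2)
    rw [Nat.card_of_isEmpty]
    norm_num



lemma pred_tail_inr {m m' : ℕ} {d : Fin 3 →₀ ℕ} (hle : em m ≤ d) {t : List ℕ}
    (h : pred m d (m :: t)) (hh : t.head? = some m') : pred m' (d - em m) t := by
  obtain ⟨hp, hc, h0, h1, h2⟩ := h
  rw [List.Chain', List.isChain_cons] at hc
  obtain ⟨hhead, hct⟩ := hc
  have hbound : ∀ x ∈ t, x ≤ m' := by
    intro x hx
    have hteq := head?_destruct hh
    rw [hteq] at hx hct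
    rcases List.mem_cons.1 hx with rfl | hx'
    · exact le_rfl
    · have := lt_head hct x hx'
      omega
  have hdat := (dat_cons hle t).1 ⟨h0, h1, h2⟩
  exact ⟨fun x hx => ⟨(hp x (by simp [hx])).1, (hp x (by simp [hx])).2.1, hbound x hx⟩,
    hct, hdat.1, hdat.2.1, hdat.2.2⟩

lemma pred_cons_inr {m m' : ℕ} {d : Fin 3 →₀ ℕ} (hm : 2 ≤ m) (hm'm : m' ≤ m)
    (Hrel : relc m m') (hle : em m ≤ d) {t : List ℕ} (h : pred m' (d - em m) t)
    (hh : t.head? = some m') : pred m d (m :: t) ∧ (m :: t).head? = some m := by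
  obtain ⟨hp, hc, h0, h1, h2⟩ := h
  have hdat := (dat_cons hle t).2 ⟨h0, h1, h2⟩
  refine ⟨⟨?_, ?_, hdat.1, hdat.2.1, hdat.2.2⟩, rfl⟩
  · intro x hx
    rcases List.mem_cons.1 hx with rfl | hx'
    · exact ⟨by omega, by omega, le_rfl⟩
    · obtain ⟨a1, a2, a3⟩ := hp x hx'
      exact ⟨a1, a2, by omega⟩
  · rw [List.Chain', List.isChain_cons]
    refine ⟨?_, hc⟩
    intro y hy
    have : t.head? = some y := hy
    have hym : y = m' := by rw [hh] at this; simpa using this.symm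
    rw [hym]
    exact Hrel

lemma cons_split {m k m' : ℕ} (hm : 2 ≤ m) (hm' : 2 ≤ m') (hkm : k < m') (hm'm : m' ≤ m)
    (H : ∀ y, 2 ≤ y → (relc m y ↔ (y ≤ k ∨ y = m'))) :
    Ex m = (MvPowerSeries.monomial (em m)) 1 * (G₁ k + Ex m') := by
  apply MvPowerSeries.ext
  intro d
  rw [MvPowerSeries.coeff_monomial_mul, coeffEx]
  by_cases hle : em m ≤ d
  · rw [if_pos hle, one_mul, map_add, coeffG, coeffEx, ← Nat.cast_add, Nat.cast_inj]
    have F1 : Finite {l : List ℕ // pred k (d - em m) l} := finite_pred _ _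
    have F2 : Finite {l : List ℕ // pred m' (d - em m) l ∧ l.head? = some m'} :=
      finite_predEx _ _
    rw [← Nat.card_sum]
    apply Nat.card_congr
    classical
    refine ⟨fun z => if hh : z.1.tail.head? = some m' then
        Sum.inr ⟨z.1.tail, ?_, hh⟩ else Sum.inl ⟨z.1.tail, ?_⟩,
      Sum.elim
        (fun z => ⟨m :: z.1, pred_cons hm (by omega)
          (fun y hy2 hyk => (H y hy2).2 (Or.inl hyk)) hle z.2⟩)
        (fun z => ⟨m :: z.1, pred_cons_inr hm hm'm
          ((H m' hm').2 (Or.inr rfl)) hle z.2.1 z.2.2⟩),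
      ?_, ?_⟩
    · -- inr payload
      have h := z.2.1
      rw [head?_destruct z.2.2] at h
      exact pred_tail_inr hle h hh
    · -- inl payload
      have h := z.2.1
      rw [head?_destruct z.2.2] at h
      refine pred_tail (fun y hy2 hhy hrel => ?_) hle h
      rcases (H y hy2).1 hrel with hy | rfl
      · exact hy
      · exact absurd hhy hh
    · -- left inverse
      intro z
      dsimp only
      split_ifs with hh
      · exact Subtype.ext (head?_destruct z.2.2).symm
      · exact Subtype.ext (head?_destruct z.2.2).symm
    · -- right inverse
      intro z
      cases z with
      | inl zz =>
        dsimp only [Sum.elim_inl]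
        have hcond : ¬ (((m :: zz.1).tail).head? = some m') := by
          intro hcontra
          have hmem : m' ∈ zz.1 := List.mem_of_mem_head? (by simpa using hcontra)
          have := zz.2.1 m' hmem
          omega
        rw [dif_neg hcond]
        exact congrArg Sum.inl (Subtype.ext rfl)
      | inr zz =>
        dsimp only [Sum.elim_inr]
        have hcond : (((m :: zz.1).tail).head? = some m') := by simpa using zz.2.2
        rw [dif_pos hcond]
        exact congrArg Sum.inr (Subtype.ext rfl)
  · rw [if_neg hle]
    have : IsEmpty {l : List ℕ // pred m d l ∧ l.head? = some m} := by
      constructor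
      rintro ⟨l, ⟨hp, hc, h0, h1, h2⟩, hh⟩
      rw [head?_destruct hh] at h0 h1 h2
      exact hle (em_le_of h0 h1 h2)
    rw [Nat.card_of_isEmpty]
    norm_num


/-! ### monomial identification -/

lemma mono0 {m : ℕ} (h : m % 3 = 0) :
    (MvPowerSeries.monomial (em m)) 1 = q ^ m := by
  rw [em, h]
  norm_num
  rw [q, MvPowerSeries.X_pow_eq]

lemma mono1 {m : ℕ} (h : m % 3 = 1) :
    (MvPowerSeries.monomial (em m)) 1 = b * q ^ m := by
  rw [em, h]
  norm_num
  rw [q, b, MvPowerSeries.X_pow_eq, MvPowerSeries.X, MvPowerSeries.monomial_mul_monomial]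
  rw [add_comm (Finsupp.single 2 m)]
  norm_num

lemma mono2 {m : ℕ} (h : m % 3 = 2) :
    (MvPowerSeries.monomial (em m)) 1 = a * q ^ m := by
  rw [em, h]
  norm_num
  rw [q, a, MvPowerSeries.X_pow_eq, MvPowerSeries.X, MvPowerSeries.monomial_mul_monomial]
  rw [add_comm (Finsupp.single 2 m)]
  norm_num

/-! ### base values -/

lemma pred_zero_nil {d : Fin 3 →₀ ℕ} {l : List ℕ} (h : pred 0 d l) : l = [] := by
  cases l with
  | nil => rfl
  | cons x t =>
    have := h.1 x (by simp)
    omega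

lemma pred_one_iff {d : Fin 3 →₀ ℕ} (l : List ℕ) : pred 1 d l ↔ pred 0 d l := by
  constructor <;> rintro ⟨hp, hc, h0, h1, h2⟩ <;>
    refine ⟨fun x hx => ?_, hc, h0, h1, h2⟩ <;> have := hp x hx <;>
    exact ⟨this.1, this.2.1, by omega⟩

lemma G1_one : G₁ 1 = G₁ 0 := by
  apply MvPowerSeries.ext
  intro d
  rw [coeffG, coeffG, Nat.cast_inj]
  exact Nat.card_congr (Equiv.subtypeEquivRight pred_one_iff)

lemma G1_zero : G₁ 0 = 1 := by
  apply MvPowerSeries.ext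
  intro d
  rw [coeffG, MvPowerSeries.coeff_one]
  by_cases hd : d = 0
  · rw [if_pos hd]
    subst hd
    have hu : ∀ z : {l : List ℕ // pred 0 0 l}, z = ⟨[], by
        refine ⟨by simp, List.IsChain.nil, by simp, by simp, by simp⟩⟩ := by
      rintro ⟨l, hl⟩
      exact Subtype.ext (pred_zero_nil hl)
    have : Unique {l : List ℕ // pred 0 0 l} :=
      ⟨⟨⟨[], by refine ⟨by simp, List.IsChain.nil, by simp, by simp, by simp⟩⟩⟩, hu⟩
    rw [Nat.card_unique]
    norm_num
  · rw [if_neg hd]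
    have : IsEmpty {l : List ℕ // pred 0 d l} := by
      constructor
      rintro ⟨l, hl⟩
      have hnil := pred_zero_nil hl
      subst hnil
      obtain ⟨_, _, h0, h1, h2⟩ := hl
      apply hd
      ext i
      fin_cases i
      · exact (by simpa using h0.symm : _)
      · exact (by simpa using h1.symm : _)
      · exact (by simpa using h2.symm : _)
    rw [Nat.card_of_isEmpty]
    norm_num

/-! ### the three recurrences -/

lemma R1 (n : ℕ) : G₁ (3*n+3) = G₁ (3*n+2) + q^(3*n+3) * G₁ (3*n) := by
  have h1 := split_head (m := 3*n+3)
  rw [show 3*n+3-1 = 3*n+2 by omega] at h1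
  rw [h1, cons_interval (m := 3*n+3) (k := 3*n) (by omega) (by omega)
    (fun y hy => by unfold relc; omega), mono0 (by omega)]

lemma R2 (n : ℕ) : G₁ (3*n+2) = G₁ (3*n+1) + (a * q^(3*n+2)) * G₁ (3*n-2) := by
  have h1 := split_head (m := 3*n+2)
  rw [show 3*n+2-1 = 3*n+1 by omega] at h1
  rw [h1, cons_interval (m := 3*n+2) (k := 3*n-2) (by omega) (by omega)
    (fun y hy => by unfold relc; omega), mono2 (by omega)]

lemma R3 (n : ℕ) : G₁ (3*n+4) = G₁ (3*n+3)
    + (b * q^(3*n+4)) * (G₁ (3*n) + (a * q^(3*n+2)) * G₁ (3*n-2)) := by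
  have h1 := split_head (m := 3*n+4)
  rw [show 3*n+4-1 = 3*n+3 by omega] at h1
  rw [h1, cons_split (m := 3*n+4) (k := 3*n) (m' := 3*n+2) (by omega) (by omega) (by omega)
    (by omega) (fun y hy => by unfold relc; omega), mono1 (by omega)]
  rw [cons_interval (m := 3*n+2) (k := 3*n-2) (by omega) (by omega)
    (fun y hy => by unfold relc; omega), mono2 (by omega)]


/-! ### Main induction -/

lemma key (n : ℕ) : G₁ (3*n-2) = FA n ∧ G₁ (3*n) = FC n := by
  induction n using Nat.twoStepInduction with
  | zero =>
    constructor
    · rw [show 3*0-2 = 0 by omega, G1_zero, FA_zero]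
    · rw [show 3*0 = 0 by omega, G1_zero, FC_zero]
  | one =>
    constructor
    · rw [show 3*1-2 = 1 by omega, G1_one, G1_zero, FA_one]
    · have h1 := R1 0
      have h2 := R2 0
      norm_num at h1 h2
      rw [show 3*1 = 3 by omega, h1, h2, G1_one, G1_zero, AlgII 0, FA_one, FA_zero, FC_zero]
      simp only [Aq, x3]
      ring
  | more n ih1 ih2 =>
    have e2 : G₁ (3*n) = FC n := ih1.2
    have e3 : G₁ (3*n-2) = FA n := ih1.1
    have e1 : G₁ (3*n+3) = FC (n+1) := by
      rw [show 3*n+3 = 3*(n+1) by ring]; exact ih2.2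
    have hA : G₁ (3*(n+2)-2) = FA (n+2) := by
      rw [show 3*(n+2)-2 = 3*n+4 by omega, R3 n, e1, e2, e3, AlgI n]
      simp only [Aq, Bq, x3]
      ring
    refine ⟨hA, ?_⟩
    have eA : G₁ (3*(n+1)+1) = FA (n+2) := by
      rw [show 3*(n+1)+1 = 3*(n+2)-2 by omega]; exact hA
    have eB : G₁ (3*(n+1)-2) = FA (n+1) := ih2.1
    have eC : G₁ (3*(n+1)) = FC (n+1) := ih2.2
    rw [show 3*(n+2) = 3*(n+1)+3 by ring, R1 (n+1), R2 (n+1), eA, eB, eC, AlgII (n+1)]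
    simp only [Aq, x3]
    ring

/-- Alladi–Andrews–Gordon polynomial representation (Berkovich–Uncu, eq. (polyAAG)):
`G_{1,3N-2}(a,b,q) = ∑_{l=0}^{⌊N/2⌋} (q³)^{binom(N-2l,2)} [N choose 2l]_{q³}
 (-a q²; q⁶)_l (-b q⁴; q⁶)_l`. -/
theorem G1_polynomial_representation (N : ℕ) :
    G₁ (3 * N - 2) =
      ∑ l ∈ Finset.range (N / 2 + 1),
        (q ^ 3) ^ (Nat.choose (N - 2 * l) 2) * qBinom (q ^ 3) N (2 * l) *
          qPoch (-(a * q ^ 2)) (q ^ 6) l * qPoch (-(b * q ^ 4)) (q ^ 6) l := by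
  have hk := (key N).1
  rw [hk]
  have hrfl : ∑ l ∈ Finset.range (N / 2 + 1),
      (q ^ 3) ^ (Nat.choose (N - 2 * l) 2) * qBinom (q ^ 3) N (2 * l) *
        qPoch (-(a * q ^ 2)) (q ^ 6) l * qPoch (-(b * q ^ 4)) (q ^ 6) l
      = ∑ l ∈ Finset.range (N / 2 + 1), x3 ^ cc (N - 2 * l) * gb N (2 * l) * Pa l * Pb l := rfl
  rw [hrfl, FA]
  apply sum_trim (by omega)
  intro l hl
  rw [gb_eq_zero (by omega)]
  ring

end CapparelliAAG
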